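/- For every q with 1 ≤ q ≤ ℓ and every chamber C ∈ ch^q_F(A), the restriction of h_q to the closure (in ℝ^ℓ) of C ∩ F^q attains its minimum at a unique point p, and there exists exactly one X ∈ L(A) with dim X = ℓ − q and X ∩ F^q = {p}. -/

import Mathlib

open Set

namespace IY

/-- An affine hyperplane arrangement in `ℝ^ℓ`, given by `n` affine-linear forms
with nonzero linear parts; the `i`-th hyperplane is the zero set of `α i`. -/
structure Arrangement (ℓ n : ℕ) where
  α : Fin n → ((Fin ℓ → ℝ) →ᵃ[ℝ] ℝ)
  nonzero : ∀ i, (α i).linear ≠ 0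

namespace Arrangement

variable {ℓ n : ℕ} (A : Arrangement ℓ n)

/-- The hyperplane `H_i = {α_i = 0}`. -/
def H (i : Fin n) : Set (Fin ℓ → ℝ) := {x | A.α i x = 0}

/-- The real complement of the subarrangement indexed by `s`. -/
def compOn (s : Set (Fin n)) : Set (Fin ℓ → ℝ) := {x | ∀ i ∈ s, A.α i x ≠ 0}

/-- Chambers of the subarrangement indexed by `s` : connected components of its
real complement. -/
def IsChamberOn (s : Set (Fin n)) (C : Set (Fin ℓ → ℝ)) : Prop :=
  ∃ x ∈ A.compOn s, C = connectedComponentIn (A.compOn s) x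

/-- Chambers of the full arrangement. -/
def IsChamber (C : Set (Fin ℓ → ℝ)) : Prop := A.IsChamberOn Set.univ C

/-- The intersection poset of the subarrangement indexed by `s` : nonempty
intersections of subfamilies (the empty intersection giving `ℝ^ℓ`). -/
def LOn (s : Set (Fin n)) (X : Set (Fin ℓ → ℝ)) : Prop :=
  X.Nonempty ∧ ∃ t : Set (Fin n), t ⊆ s ∧ X = ⋂ i ∈ t, A.H i

/-- The intersection poset `L(A)`. -/
def L (X : Set (Fin ℓ → ℝ)) : Prop := A.LOn Set.univ X

/-- The real part of a point of `ℂ^ℓ`. -/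
def reP {ℓ : ℕ} (z : Fin ℓ → ℂ) : Fin ℓ → ℝ := fun j => (z j).re

/-- The imaginary part of a point of `ℂ^ℓ`. -/
def imP {ℓ : ℕ} (z : Fin ℓ → ℂ) : Fin ℓ → ℝ := fun j => (z j).im

/-- The point `x + iv` of `ℂ^ℓ`. -/
def mkC {ℓ : ℕ} (x v : Fin ℓ → ℝ) : Fin ℓ → ℂ := fun j => ⟨x j, v j⟩

/-- The complexified complement `M(A) = ℂ^ℓ \ ⋃ H_ℂ`; a point `x + iv` lies on
`H_ℂ = {α_ℂ = 0}` iff `α(x) = 0` and the linear part of `α` kills `v`. -/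
def M : Set (Fin ℓ → ℂ) :=
  {z | ∀ i : Fin n, ¬(A.α i (reP z) = 0 ∧ (A.α i).linear (imP z) = 0)}

end Arrangement

/-- Dimension of a subset of `ℝ^ℓ` (for affine subspaces, their dimension). -/
noncomputable def dimS {ℓ : ℕ} (X : Set (Fin ℓ → ℝ)) : ℕ :=
  Module.finrank ℝ (affineSpan ℝ X).direction

/-- The direction `τ(X)` of (the affine span of) a subset of `ℝ^ℓ`. -/
noncomputable def tau {ℓ : ℕ} (X : Set (Fin ℓ → ℝ)) : Submodule ℝ (Fin ℓ → ℝ) :=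
  (affineSpan ℝ X).direction

/-- A flag in `ℝ^ℓ` given by defining affine-linear forms `h_1, …, h_ℓ`
(0-indexed: `h j` is the form `h_{j+1}`). -/
structure Flag (ℓ : ℕ) where
  h : Fin ℓ → ((Fin ℓ → ℝ) →ᵃ[ℝ] ℝ)

namespace Flag

variable {ℓ : ℕ} (𝓕 : Flag ℓ)

/-- The flag subspace `F^q = {h_{q+1} = ⋯ = h_ℓ = 0}`. -/
def F (q : ℕ) : Set (Fin ℓ → ℝ) := {x | ∀ j : Fin ℓ, q ≤ (j : ℕ) → 𝓕.h j x = 0}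

/-- `𝓕.hq q` is the form `h_q` in 1-indexed notation (junk value `0` out of range). -/
noncomputable def hq (q : ℕ) : (Fin ℓ → ℝ) →ᵃ[ℝ] ℝ :=
  if hlt : q - 1 < ℓ then 𝓕.h ⟨q - 1, hlt⟩ else 0

end Flag

/-- Genericity of the flag: for every `X ∈ L(A)`, `F^q ∩ X` is an affine subspace
of dimension `q + dim X - ℓ`, empty when `q + dim X < ℓ`. -/
def GenericFlag {ℓ n : ℕ} (A : Arrangement ℓ n) (𝓕 : Flag ℓ) : Prop :=
  ∀ X, A.L X → ∀ q, q ≤ ℓ →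
    (ℓ ≤ q + dimS X →
      ∃ W : AffineSubspace ℝ (Fin ℓ → ℝ), (W : Set (Fin ℓ → ℝ)).Nonempty ∧
        (W : Set (Fin ℓ → ℝ)) = 𝓕.F q ∩ X ∧
        Module.finrank ℝ W.direction = q + dimS X - ℓ) ∧
    (q + dimS X < ℓ → 𝓕.F q ∩ X = ∅)

/-- Condition (1) of the Assumption, for the subarrangement indexed by `s`:
if a chamber `C` meets `F^q` but not `F^{q-1}`, then `h_q > 0` on `C ∩ F^q`. -/
def Cond1On {ℓ n : ℕ} (A : Arrangement ℓ n) (s : Set (Fin n)) (𝓕 : Flag ℓ) : Prop :=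
  ∀ q : ℕ, 1 ≤ q → q ≤ ℓ → ∀ C, A.IsChamberOn s C →
    (C ∩ 𝓕.F q).Nonempty → C ∩ 𝓕.F (q - 1) = ∅ →
    ∀ x ∈ C ∩ 𝓕.F q, 0 < 𝓕.hq q x

/-- Condition (2) of the Assumption, for the subarrangement indexed by `s`:
distinct `X, X'` in the intersection poset of dimension `ℓ - q` have different
`h_q`-values at their intersection points with `F^q`. -/
def Cond2On {ℓ n : ℕ} (A : Arrangement ℓ n) (s : Set (Fin n)) (𝓕 : Flag ℓ) : Prop :=
  ∀ q : ℕ, 1 ≤ q → q ≤ ℓ → ∀ X X', A.LOn s X → A.LOn s X' →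
    dimS X = ℓ - q → dimS X' = ℓ - q → X ≠ X' →
    ∀ p ∈ X ∩ 𝓕.F q, ∀ p' ∈ X' ∩ 𝓕.F q, 𝓕.hq q p ≠ 𝓕.hq q p'

/-- `C ∈ ch^q_F(A)` : `C` is a chamber meeting `F^q` but not `F^{q-1}`
(the latter condition being empty for `q = 0`, since `F^{-1} = ∅`). -/
def ChF {ℓ n : ℕ} (A : Arrangement ℓ n) (𝓕 : Flag ℓ) (q : ℕ)
    (C : Set (Fin ℓ → ℝ)) : Prop :=
  A.IsChamber C ∧ (C ∩ 𝓕.F q).Nonempty ∧ (q = 0 ∨ C ∩ 𝓕.F (q - 1) = ∅)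

/-- `X = X_C` for `C ∈ ch^q_F(A)` : `X ∈ L(A)` has dimension `ℓ - q` and meets
`F^q` exactly in the unique minimum point of `h_q` on the closure of `C ∩ F^q`. -/
def IsXC {ℓ n : ℕ} (A : Arrangement ℓ n) (𝓕 : Flag ℓ) (q : ℕ)
    (C X : Set (Fin ℓ → ℝ)) : Prop :=
  A.L X ∧ dimS X = ℓ - q ∧
  ∃ p : Fin ℓ → ℝ, X ∩ 𝓕.F q = {p} ∧ p ∈ closure (C ∩ 𝓕.F q) ∧
    ∀ y ∈ closure (C ∩ 𝓕.F q), 𝓕.hq q p ≤ 𝓕.hq q y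

/-- Indices of the hyperplanes parallel to `X`, i.e. `A_{[X]} = {H : τ(X) ⊆ τ(H)}`. -/
def parIdx {ℓ n : ℕ} (A : Arrangement ℓ n) (X : Set (Fin ℓ → ℝ)) : Set (Fin n) :=
  {i | tau X ≤ LinearMap.ker (A.α i).linear}

/-- `H_i ∈ Sep(C, C')` : the hyperplane `H_i` separates the chambers `C` and `C'`. -/
def SepCh {ℓ n : ℕ} (A : Arrangement ℓ n) (C C' : Set (Fin ℓ → ℝ)) (i : Fin n) : Prop :=
  ((∀ x ∈ C, 0 < A.α i x) ∧ (∀ y ∈ C', A.α i y < 0)) ∨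
  ((∀ x ∈ C, A.α i x < 0) ∧ (∀ y ∈ C', 0 < A.α i y))

/-- `H_i ∈ Sep(p₁, p₂)` : the hyperplane `H_i` meets the segment `[p₁, p₂]`. -/
def SepPt {ℓ n : ℕ} (A : Arrangement ℓ n) (p₁ p₂ : Fin ℓ → ℝ) (i : Fin n) : Prop :=
  ∃ w ∈ segment ℝ p₁ p₂, A.α i w = 0

/-- The piece `S(C)` attached to a chamber with `τ(X_C) = T` and base point `p`:
all `x + iv` with `v ∈ T` and `v ∉ τ(H)` for every `H ∈ Sep(p, x)`. -/
def S {ℓ n : ℕ} (A : Arrangement ℓ n) (T : Submodule ℝ (Fin ℓ → ℝ))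
    (p : Fin ℓ → ℝ) : Set (Fin ℓ → ℂ) :=
  {z | Arrangement.imP z ∈ T ∧
    ∀ i : Fin n, SepPt A p (Arrangement.reP z) i →
      (A.α i).linear (Arrangement.imP z) ≠ 0}

end IY

namespace IY
open Arrangement

section Aux
open Module


lemma affApply {V : Type} [AddCommGroup V] [Module ℝ V] (f : V →ᵃ[ℝ] ℝ) (x : V) :
    f x = f.linear x + f 0 := by
  conv_lhs => rw [AffineMap.decomp f]
  simp

lemma lp_attain (d : ℕ) : ∀ (V : Type) [AddCommGroup V] [Module ℝ V] [FiniteDimensional ℝ V],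
    Module.finrank ℝ V ≤ d → ∀ (G : List (V →ᵃ[ℝ] ℝ)) (f : V →ᵃ[ℝ] ℝ) (B : ℝ),
    (∃ x, ∀ g ∈ G, 0 ≤ g x) → (∀ x, (∀ g ∈ G, 0 ≤ g x) → B ≤ f x) →
    ∃ x, (∀ g ∈ G, 0 ≤ g x) ∧ ∀ y, (∀ g ∈ G, 0 ≤ g y) → f x ≤ f y := by
  induction d with
  | zero =>
    intro V _ _ _ hd G f B hne hB
    have : Module.finrank ℝ V = 0 := Nat.le_zero.mp hd
    have hsub : Subsingleton V := finrank_zero_iff.mp this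
    obtain ⟨x, hx⟩ := hne
    exact ⟨x, hx, fun y hy => le_of_eq (congrArg f (Subsingleton.elim x y))⟩
  | succ d ih =>
    intro V _ _ _ hd G
    induction G with
    | nil =>
      intro f B hne hB
      have hlin : f.linear = 0 := by
        by_contra h
        obtain ⟨v, hv⟩ : ∃ v, f.linear v ≠ 0 := by
          by_contra h'; push_neg at h'; exact h (LinearMap.ext h')
        have := hB ((((B - 1) - f 0) / f.linear v) • v) (by simp)
        rw [affApply] at this
        simp [LinearMap.map_smul, smul_eq_mul, div_mul_cancel₀ _ hv] at this
        linarith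
      have hconst : ∀ y : V, f y = f 0 := fun y => by rw [affApply f y, hlin]; simp
      exact ⟨0, by simp, fun y _ => (hconst y).ge⟩
    | cons g G' ihG =>
      intro f B hne hB
      simp only [List.forall_mem_cons] at hne hB ⊢
      by_cases hlin : g.linear = 0
      · -- g is a constant
        have hgc : ∀ x : V, g x = g 0 := fun x => by rw [affApply, hlin]; simp
        have hg0 : (0:ℝ) ≤ g 0 := by obtain ⟨x, hx, _⟩ := hne; rw [← hgc x]; exact hx
        obtain ⟨x, hx, hmin⟩ := ihG f B ⟨hne.choose, hne.choose_spec.2⟩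
          (fun x hx => hB x ⟨by rw [hgc]; exact hg0, hx⟩)
        exact ⟨x, ⟨by rw [hgc]; exact hg0, hx⟩, fun y hy => hmin y hy.2⟩
      · -- g has nonzero linear part
        -- Either we find a minimizer directly, or we can reduce to the hyperplane {g = 0}
        have key : (∃ x, ((0 ≤ g x) ∧ ∀ g' ∈ G', 0 ≤ g' x) ∧
              ∀ y, ((0 ≤ g y) ∧ ∀ g' ∈ G', 0 ≤ g' y) → f x ≤ f y) ∨
            (∀ y, ((0 ≤ g y) ∧ ∀ g' ∈ G', 0 ≤ g' y) →
              ∃ x', (∀ g' ∈ G', 0 ≤ g' x') ∧ f x' ≤ f y ∧ g x' < 0) := by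
          by_cases hbdd : ∃ B', ∀ x, (∀ g' ∈ G', 0 ≤ g' x) → B' ≤ f x
          · obtain ⟨B', hB'⟩ := hbdd
            obtain ⟨x', hx', hmin'⟩ := ihG f B' ⟨hne.choose, hne.choose_spec.2⟩ hB'
            by_cases hgx' : 0 ≤ g x'
            · exact Or.inl ⟨x', ⟨hgx', hx'⟩, fun y hy => hmin' y hy.2⟩
            · exact Or.inr (fun y hy => ⟨x', hx', hmin' y hy.2, lt_of_not_ge hgx'⟩)
          · push_neg at hbdd
            refine Or.inr (fun y hy => ?_)
            obtain ⟨x', hx', hfx'⟩ := hbdd B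
            refine ⟨x', hx', le_trans hfx'.le (hB y hy), ?_⟩
            by_contra hge
            exact absurd (hB x' ⟨le_of_not_gt hge, hx'⟩) (not_le.mpr hfx')
        rcases key with h | hred
        · exact h
        -- crossing lemma: from x' with g x' < 0 and y in K, get z in K with g z = 0, f z ≤ f y
        have hcross : ∀ y, ((0 ≤ g y) ∧ ∀ g' ∈ G', 0 ≤ g' y) →
            ∃ z, (g z = 0 ∧ ∀ g' ∈ G', 0 ≤ g' z) ∧ f z ≤ f y := by
          intro y hy
          obtain ⟨x', hx', hfx', hgx'⟩ := hred y hy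
          set t : ℝ := g y / (g y - g x') with ht
          have hden : 0 < g y - g x' := by linarith [hy.1]
          have ht0 : 0 ≤ t := div_nonneg hy.1 hden.le
          have ht1 : t ≤ 1 := by rw [div_le_one hden]; linarith
          have hsum : t + (1 - t) = 1 := by ring
          refine ⟨t • x' + (1 - t) • y, ⟨?_, fun g' hg' => ?_⟩, ?_⟩
          · rw [Convex.combo_affine_apply hsum]
            have hmul : t * (g y - g x') = g y := div_mul_cancel₀ _ hden.ne'
            simp only [smul_eq_mul]
            linear_combination -hmul
          · rw [Convex.combo_affine_apply hsum]
            have h1 := hx' g' hg'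
            have h2 := hy.2 g' hg'
            simp only [smul_eq_mul]
            nlinarith [mul_nonneg ht0 h1, mul_nonneg (by linarith : (0:ℝ) ≤ 1 - t) h2]
          · rw [Convex.combo_affine_apply hsum]
            simp only [smul_eq_mul]
            nlinarith [mul_le_mul_of_nonneg_left hfx' ht0]
        -- set up the hyperplane {g = 0} as affine subspace over ker g.linear
        obtain ⟨v, hv⟩ : ∃ v, g.linear v ≠ 0 := by
          by_contra h'; push_neg at h'; exact hlin (LinearMap.ext h')
        set x₀ : V := (-(g 0) / g.linear v) • v with hx₀
        have hgx₀ : g x₀ = 0 := by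
          rw [affApply]; simp [hx₀, LinearMap.map_smul, smul_eq_mul, div_mul_cancel₀ _ hv]
        set κ := LinearMap.ker g.linear with hκ
        have hrank : Module.finrank ℝ κ ≤ d := by
          have h1 : Module.finrank ℝ (LinearMap.range g.linear) + Module.finrank ℝ κ
              = Module.finrank ℝ V := LinearMap.finrank_range_add_finrank_ker g.linear
          have h2 : LinearMap.range g.linear = ⊤ := by
            rw [LinearMap.range_eq_top]
            intro c
            exact ⟨(c / g.linear v) • v, by simp [LinearMap.map_smul, smul_eq_mul,
              div_mul_cancel₀ _ hv]⟩
          rw [h2] at h1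
          simp [finrank_top] at h1
          omega
        set e : κ →ᵃ[ℝ] V := (LinearMap.toAffineMap κ.subtype) + AffineMap.const ℝ κ x₀ with he
        have heval : ∀ w : κ, e w = (w : V) + x₀ := fun w => rfl
        have hge : ∀ w : κ, g (e w) = 0 := by
          intro w
          rw [heval, affApply, map_add]
          have h1 : g.linear (w : V) = 0 := w.2
          have h2 : g.linear x₀ + g 0 = 0 := by rw [← affApply]; exact hgx₀
          rw [h1]; linarith
        set G'' := G'.map (fun g' => g'.comp e) with hG''
        have hmemG'' : ∀ w : κ, (∀ g'' ∈ G'', 0 ≤ g'' w) ↔ (∀ g' ∈ G', 0 ≤ g' (e w)) := by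
          intro w
          constructor
          · intro h g' hg'; exact h (g'.comp e) (List.mem_map_of_mem hg')
          · intro h g'' hg''
            obtain ⟨g', hg', rfl⟩ := List.mem_map.mp hg''
            exact h g' hg'
        obtain ⟨y₀, hy₀⟩ := hne
        obtain ⟨z₀, hz₀, _⟩ := hcross y₀ hy₀
        have hz₀κ : z₀ - x₀ ∈ κ := by
          rw [hκ, LinearMap.mem_ker, ← vsub_eq_sub, AffineMap.linearMap_vsub, hz₀.1, hgx₀]
          simp
        have hez₀ : e ⟨z₀ - x₀, hz₀κ⟩ = z₀ := by rw [heval]; simp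
        obtain ⟨w1, hw1, hw1min⟩ := ih κ hrank G'' (f.comp e) B
          ⟨⟨z₀ - x₀, hz₀κ⟩, (hmemG'' _).mpr (by rw [hez₀]; exact hz₀.2)⟩
          (fun w hw => hB (e w) ⟨(hge w).ge, (hmemG'' w).mp hw⟩)
        refine ⟨e w1, ⟨(hge w1).ge, (hmemG'' w1).mp hw1⟩, fun y hy => ?_⟩
        obtain ⟨z, hz, hfz⟩ := hcross y hy
        have hzκ : z - x₀ ∈ κ := by
          rw [hκ, LinearMap.mem_ker, ← vsub_eq_sub, AffineMap.linearMap_vsub, hz.1, hgx₀]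
          simp
        have hez : e ⟨z - x₀, hzκ⟩ = z := by rw [heval]; simp
        calc f (e w1) = (f.comp e) w1 := rfl
          _ ≤ (f.comp e) ⟨z - x₀, hzκ⟩ := hw1min _ ((hmemG'' _).mpr (by rw [hez]; exact hz.2))
          _ = f z := by rw [AffineMap.comp_apply, hez]
          _ ≤ f y := hfz


lemma affAdd {V : Type} [AddCommGroup V] [Module ℝ V] (f : V →ᵃ[ℝ] ℝ) (v x : V) :
    f (v + x) = f.linear v + f x := by
  simpa [vadd_eq_add] using f.map_vadd x v

/-- Chambers are exactly the open sign-cells. -/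
lemma chamber_eq_cell {ℓ n : ℕ} (A : Arrangement ℓ n) (a : Fin ℓ → ℝ)
    (ha : a ∈ A.compOn Set.univ) :
    connectedComponentIn (A.compOn Set.univ) a = {x | ∀ i, 0 < A.α i a * A.α i x} := by
  have hcont : ∀ i, Continuous (A.α i) := fun i => (A.α i).continuous_of_finiteDimensional
  have haa : ∀ i, A.α i a ≠ 0 := fun i => ha i (Set.mem_univ i)
  set cell : Set (Fin ℓ → ℝ) := {x | ∀ i, 0 < A.α i a * A.α i x} with hcell
  have hcelleq : cell = ⋂ i, ((A.α i a • A.α i) : (Fin ℓ → ℝ) →ᵃ[ℝ] ℝ) ⁻¹' (Set.Ioi 0) := by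
    ext x; simp [hcell, Set.mem_iInter, smul_eq_mul]
  have hopen : IsOpen cell := by
    rw [hcelleq]
    exact isOpen_iInter_of_finite fun i =>
      isOpen_Ioi.preimage (AffineMap.continuous_of_finiteDimensional _)
  have hconv : Convex ℝ cell := by
    rw [hcelleq]
    exact convex_iInter fun i => (convex_Ioi (0:ℝ)).affine_preimage _
  have hsub : cell ⊆ A.compOn Set.univ := by
    intro x hx i _
    intro h0
    have := hx i
    rw [h0, mul_zero] at this
    exact lt_irrefl _ this
  have hacell : a ∈ cell := fun i => mul_self_pos.mpr (haa i)
  apply Set.Subset.antisymm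
  · -- component ⊆ cell
    intro x hx i
    by_contra hcon
    have hxΩ : x ∈ A.compOn Set.univ := connectedComponentIn_subset _ _ hx
    have hprod : A.α i a * A.α i x < 0 :=
      lt_of_le_of_ne (not_lt.mp hcon) (mul_ne_zero (haa i) (hxΩ i (Set.mem_univ i)))
    have hT : IsPreconnected (connectedComponentIn (A.compOn Set.univ) a) :=
      isPreconnected_connectedComponentIn
    have haT : a ∈ connectedComponentIn (A.compOn Set.univ) a :=
      mem_connectedComponentIn ha
    have hcontOn : ContinuousOn (A.α i) (connectedComponentIn (A.compOn Set.univ) a) :=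
      (hcont i).continuousOn
    have h0mem : (0:ℝ) ∈ A.α i '' (connectedComponentIn (A.compOn Set.univ) a) := by
      rcases mul_neg_iff.mp hprod with ⟨hpa, hpx⟩ | ⟨hpa, hpx⟩
      · exact hT.intermediate_value hx haT hcontOn ⟨hpx.le, hpa.le⟩
      · exact hT.intermediate_value haT hx hcontOn ⟨hpa.le, hpx.le⟩
    obtain ⟨y, hyT, hy0⟩ := h0mem
    exact (connectedComponentIn_subset _ _ hyT) i (Set.mem_univ i) hy0
  · exact hconv.isPreconnected.subset_connectedComponentIn hacell hsub

/-- The "small parameter" lemma: staying strictly on the right side of the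
hyperplanes not containing `p`, while moving from `p` in direction `dv`. -/
lemma small_delta {ℓ n : ℕ} (A : Arrangement ℓ n) (a p : Fin ℓ → ℝ)
    (hp : ∀ i, A.α i p ≠ 0 → 0 < A.α i a * A.α i p) (dv : Fin ℓ → ℝ) :
    ∃ δ > 0, ∀ s : ℝ, |s| < δ → ∀ i, A.α i p ≠ 0 → 0 < A.α i a * A.α i (p + s • dv) := by
  classical
  set U : Set (Fin ℓ → ℝ) := {x | ∀ i, A.α i p ≠ 0 → 0 < A.α i a * A.α i x} with hU
  have hopen : IsOpen U := by
    have : U = ⋂ i, {x | A.α i p ≠ 0 → 0 < A.α i a * A.α i x} := by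
      ext x; simp [hU, Set.mem_iInter]
    rw [this]
    refine isOpen_iInter_of_finite fun i => ?_
    by_cases hi : A.α i p = 0
    · simp only [hi]
      convert isOpen_univ using 1
      ext x; simp
    · have : {x | A.α i p ≠ 0 → 0 < A.α i a * A.α i x}
          = ((A.α i a • A.α i) : (Fin ℓ → ℝ) →ᵃ[ℝ] ℝ) ⁻¹' (Set.Ioi 0) := by
        ext x; simp [hi, smul_eq_mul]
      rw [this]
      exact isOpen_Ioi.preimage (AffineMap.continuous_of_finiteDimensional _)
  have hpU : p ∈ U := hp
  have hγ : Continuous (fun s : ℝ => p + s • dv) :=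
    continuous_const.add (continuous_id.smul continuous_const)
  have hpre : IsOpen ((fun s : ℝ => p + s • dv) ⁻¹' U) := hopen.preimage hγ
  have h0 : (0:ℝ) ∈ (fun s : ℝ => p + s • dv) ⁻¹' U := by
    simp only [Set.mem_preimage, zero_smul, add_zero]
    exact hpU
  obtain ⟨δ, hδpos, hball⟩ := Metric.isOpen_iff.mp hpre 0 h0
  refine ⟨δ, hδpos, fun s hs i hi => ?_⟩
  have : s ∈ Metric.ball (0:ℝ) δ := by
    rw [Metric.mem_ball, Real.dist_eq, sub_zero]; exact hs
  exact hball this i hi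

end Aux

set_option maxHeartbeats 2000000 in
/-- For `1 ≤ q ≤ ℓ` and `C ∈ ch^q_F(A)`, the restriction of
`h_q` to the closure of `C ∩ F^q` attains its minimum at a unique point `p`,
and there is exactly one `X ∈ L(A)` with `dim X = ℓ - q` and `X ∩ F^q = {p}`. -/
theorem minimum_and_XC_unique (ℓ n : ℕ) (A : Arrangement ℓ n) (𝓕 : Flag ℓ)
    (hind : LinearIndependent ℝ fun j : Fin ℓ => (𝓕.h j).linear)
    (hgen : GenericFlag A 𝓕)
    (h1 : Cond1On A Set.univ 𝓕) (h2 : Cond2On A Set.univ 𝓕)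
    (q : ℕ) (hq1 : 1 ≤ q) (hq2 : q ≤ ℓ)
    (C : Set (Fin ℓ → ℝ)) (hC : ChF A 𝓕 q C) :
    (∃! p : Fin ℓ → ℝ, p ∈ closure (C ∩ 𝓕.F q) ∧
        ∀ y ∈ closure (C ∩ 𝓕.F q), 𝓕.hq q p ≤ 𝓕.hq q y) ∧
    ∀ p : Fin ℓ → ℝ,
      (p ∈ closure (C ∩ 𝓕.F q) ∧ ∀ y ∈ closure (C ∩ 𝓕.F q), 𝓕.hq q p ≤ 𝓕.hq q y) →
      ∃! X : Set (Fin ℓ → ℝ), A.L X ∧ dimS X = ℓ - q ∧ X ∩ 𝓕.F q = {p} := by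
  classical
  obtain ⟨hCch, hCFq, hCF0⟩ := hC
  obtain ⟨a, haC, haF⟩ := hCFq
  have hqne : q ≠ 0 := by omega
  have hCF' : C ∩ 𝓕.F (q-1) = ∅ := hCF0.resolve_left hqne
  obtain ⟨x₀, hx₀Ω, hCeq⟩ := hCch
  have haΩ : a ∈ A.compOn Set.univ := by
    have hs : C ⊆ A.compOn Set.univ := by
      rw [hCeq]; exact connectedComponentIn_subset _ _
    exact hs haC
  have haa : ∀ i, A.α i a ≠ 0 := fun i => haΩ i (Set.mem_univ i)
  have hCcell : C = {x | ∀ i, 0 < A.α i a * A.α i x} := by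
    have haC' : a ∈ connectedComponentIn (A.compOn Set.univ) x₀ := by
      rw [← hCeq]; exact haC
    rw [hCeq, connectedComponentIn_eq haC', chamber_eq_cell A a haΩ]
  set P : Set (Fin ℓ → ℝ) := {x | (∀ i, 0 ≤ A.α i a * A.α i x) ∧ x ∈ 𝓕.F q} with hPdef
  have hFclosed : ∀ r : ℕ, IsClosed (𝓕.F r) := by
    intro r
    have hFi : 𝓕.F r = ⋂ j : Fin ℓ, {x | r ≤ (j:ℕ) → 𝓕.h j x = 0} := by
      ext x; simp [Flag.F, Set.mem_iInter]
    rw [hFi]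
    refine isClosed_iInter fun j => ?_
    by_cases hj : r ≤ (j:ℕ)
    · have he : {x | r ≤ (j:ℕ) → 𝓕.h j x = 0} = (𝓕.h j) ⁻¹' {0} := by ext x; simp [hj]
      rw [he]
      exact isClosed_singleton.preimage (AffineMap.continuous_of_finiteDimensional _)
    · have he : {x | r ≤ (j:ℕ) → 𝓕.h j x = 0} = Set.univ := by ext x; simp [hj]
      rw [he]; exact isClosed_univ
  have hPclosed : IsClosed P := by
    have he : P = (⋂ i, ((A.α i a • A.α i) : (Fin ℓ → ℝ) →ᵃ[ℝ] ℝ) ⁻¹' (Set.Ici 0)) ∩ 𝓕.F q := by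
      ext x
      simp only [hPdef, Set.mem_setOf_eq, Set.mem_inter_iff, Set.mem_iInter, Set.mem_preimage,
        AffineMap.coe_smul, Pi.smul_apply, smul_eq_mul, Set.mem_Ici]
    rw [he]
    exact (isClosed_iInter fun i =>
      isClosed_Ici.preimage (AffineMap.continuous_of_finiteDimensional _)).inter (hFclosed q)
  have hlinsub : ∀ (f : (Fin ℓ → ℝ) →ᵃ[ℝ] ℝ) (x y : Fin ℓ → ℝ),
      f.linear (x - y) = f x - f y := by
    intro f x y
    rw [← vsub_eq_sub x y, AffineMap.linearMap_vsub, vsub_eq_sub]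
  have hsegmem : ∀ b ∈ P, ∀ t : ℝ, 0 < t → t ≤ 1 → b + t • (a - b) ∈ C ∩ 𝓕.F q := by
    intro b hb t ht0 ht1
    have heval : ∀ f : (Fin ℓ → ℝ) →ᵃ[ℝ] ℝ, f (b + t • (a - b)) = (1-t) * f b + t * f a := by
      intro f
      rw [show b + t • (a - b) = t • (a - b) + b from add_comm _ _, affAdd,
        LinearMap.map_smul, smul_eq_mul, hlinsub]
      ring
    constructor
    · rw [hCcell]
      intro i
      rw [heval]
      have h1' : 0 ≤ A.α i a * A.α i b := hb.1 i
      have h2' : 0 < A.α i a * A.α i a := mul_self_pos.mpr (haa i)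
      nlinarith [mul_nonneg (by linarith : (0:ℝ) ≤ 1 - t) h1', mul_pos ht0 h2']
    · intro j hj
      rw [heval, hb.2 j hj, haF j hj]; ring
  have hKP : closure (C ∩ 𝓕.F q) = P := by
    apply Set.Subset.antisymm
    · apply closure_minimal _ hPclosed
      rintro x ⟨hxC, hxF⟩
      refine ⟨fun i => le_of_lt ?_, hxF⟩
      rw [hCcell] at hxC; exact hxC i
    · intro b hb
      have htend : Filter.Tendsto (fun k : ℕ => b + (1/((k:ℝ)+1)) • (a - b))
          Filter.atTop (nhds b) := by
        have h0 : Filter.Tendsto (fun k : ℕ => 1/((k:ℝ)+1)) Filter.atTop (nhds 0) :=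
          tendsto_one_div_add_atTop_nhds_zero_nat
        have := Filter.Tendsto.add (tendsto_const_nhds (x := b))
          (h0.smul (tendsto_const_nhds (x := a - b)))
        simpa using this
      refine mem_closure_of_tendsto htend (Filter.Eventually.of_forall fun k => ?_)
      refine hsegmem b hb _ (by positivity) ?_
      rw [div_le_one (by positivity)]
      have : (0:ℝ) ≤ (k:ℝ) := Nat.cast_nonneg k
      linarith
  have hpos : ∀ x ∈ C ∩ 𝓕.F q, 0 < 𝓕.hq q x :=
    h1 q hq1 hq2 C ⟨x₀, hx₀Ω, hCeq⟩ ⟨a, haC, haF⟩ hCF'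
  have hqcont : Continuous (𝓕.hq q) := AffineMap.continuous_of_finiteDimensional _
  have hnonneg : ∀ x ∈ P, 0 ≤ 𝓕.hq q x := by
    intro x hx
    rw [← hKP] at hx
    have hcl : closure (C ∩ 𝓕.F q) ⊆ {y | 0 ≤ 𝓕.hq q y} :=
      closure_minimal (fun y hy => (hpos y hy).le) (isClosed_le continuous_const hqcont)
    exact hcl hx
  set G : List ((Fin ℓ → ℝ) →ᵃ[ℝ] ℝ) :=
    (List.ofFn fun i : Fin n => A.α i a • A.α i) ++
      ((List.ofFn fun j : Fin ℓ => if q ≤ (j:ℕ) then 𝓕.h j else 0) ++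
       (List.ofFn fun j : Fin ℓ => if q ≤ (j:ℕ) then -(𝓕.h j) else 0)) with hGdef
  have hGmem : ∀ x, (∀ g ∈ G, 0 ≤ g x) ↔ x ∈ P := by
    intro x
    constructor
    · intro hg
      constructor
      · intro i
        have hmem : (A.α i a • A.α i) ∈ G := by
          rw [hGdef]
          exact List.mem_append_left _ (by exact List.mem_ofFn.mpr ⟨i, rfl⟩)
        have := hg _ hmem
        simpa [smul_eq_mul] using this
      · intro j hj
        have hmem1 : (𝓕.h j) ∈ G := by
          rw [hGdef]
          refine List.mem_append_right _ (List.mem_append_left _ ?_)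
          exact List.mem_ofFn.mpr ⟨j, by simp [hj]⟩
        have hmem2 : (-(𝓕.h j)) ∈ G := by
          rw [hGdef]
          refine List.mem_append_right _ (List.mem_append_right _ ?_)
          exact List.mem_ofFn.mpr ⟨j, by simp [hj]⟩
        have hplus := hg _ hmem1
        have hminus := hg _ hmem2
        simp only [AffineMap.coe_neg, Pi.neg_apply] at hminus
        linarith
    · rintro ⟨h1x, h2x⟩ g hgG
      rw [hGdef] at hgG
      rcases List.mem_append.mp hgG with hgG' | hgG'
      · obtain ⟨i, rfl⟩ := List.mem_ofFn.mp hgG'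
        simpa [smul_eq_mul] using h1x i
      · rcases List.mem_append.mp hgG' with hgG'' | hgG''
        · obtain ⟨j, rfl⟩ := List.mem_ofFn.mp hgG''
          by_cases hj : q ≤ (j:ℕ)
          · simp [hj, h2x j hj]
          · simp [hj]
        · obtain ⟨j, rfl⟩ := List.mem_ofFn.mp hgG''
          by_cases hj : q ≤ (j:ℕ)
          · simp [hj, h2x j hj]
          · simp [hj]
  have haP : a ∈ P := ⟨fun i => (mul_self_pos.mpr (haa i)).le, haF⟩
  obtain ⟨p₀, hp₀G, hp₀min⟩ := lp_attain ℓ (Fin ℓ → ℝ)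
    (le_of_eq (by simp)) G (𝓕.hq q) 0 ⟨a, (hGmem a).mpr haP⟩
    (fun x hx => hnonneg x ((hGmem x).mp hx))
  have hp₀P : p₀ ∈ P := (hGmem p₀).mp hp₀G
  have hp₀Pmin : ∀ y ∈ P, 𝓕.hq q p₀ ≤ 𝓕.hq q y := fun y hy => hp₀min y ((hGmem y).mpr hy)
  have hqlt : q - 1 < ℓ := by omega
  have hhq : 𝓕.hq q = 𝓕.h ⟨q-1, hqlt⟩ := by rw [Flag.hq, dif_pos hqlt]
  have hF'mem : ∀ x, x ∈ 𝓕.F q → 𝓕.hq q x = 0 → x ∈ 𝓕.F (q-1) := by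
    intro x hxF hx0 j hj
    rcases Nat.lt_or_ge (j:ℕ) q with hlt | hge
    · have hjq : j = ⟨q-1, hqlt⟩ := by
        apply Fin.ext
        show (j:ℕ) = q - 1
        omega
      rw [hjq, ← hhq]; exact hx0
    · exact hxF j hge
  have hFsub : 𝓕.F (q-1) ⊆ 𝓕.F q := fun x hx j hj => hx j (by omega)
  -- the key step: any minimizer of h_q over P gives rise to a suitable X
  have key : ∀ p ∈ P, (∀ y ∈ P, 𝓕.hq q p ≤ 𝓕.hq q y) →
      ∃ X, A.L X ∧ dimS X = ℓ - q ∧ X ∩ 𝓕.F q = {p} := by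
    intro p hpP hpmin
    set tset : Set (Fin n) := {i | A.α i p = 0} with htset
    set X : Set (Fin ℓ → ℝ) := ⋂ i ∈ tset, A.H i with hXdef
    have hpX : p ∈ X := Set.mem_iInter₂.mpr fun i hi => hi
    have hXzero : ∀ x ∈ X, ∀ i ∈ tset, A.α i x = 0 := fun x hx i hi => Set.mem_iInter₂.mp hx i hi
    have hLX : A.L X := ⟨⟨p, hpX⟩, tset, Set.subset_univ _, rfl⟩
    have hpFX : p ∈ 𝓕.F q ∩ X := ⟨hpP.2, hpX⟩
    have hgenX := hgen X hLX
    have hle : ℓ ≤ q + dimS X := by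
      by_contra hcon
      push_neg at hcon
      have hemp := (hgenX q hq2).2 hcon
      rw [hemp] at hpFX
      exact hpFX
    obtain ⟨W, hWne, hWset, hWdim⟩ := (hgenX q hq2).1 hle
    have hpW : p ∈ W := by
      rw [← AffineSubspace.mem_coe, hWset]; exact hpFX
    have hppos : ∀ i, A.α i p ≠ 0 → 0 < A.α i a * A.α i p := fun i hi =>
      lt_of_le_of_ne (hpP.1 i) (Ne.symm (mul_ne_zero (haa i) hi))
    have hPmem : ∀ u ∈ W.direction, ∃ δ > 0, ∀ s : ℝ, |s| < δ → p + s • u ∈ P := by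
      intro u hu
      obtain ⟨δ, hδpos, hδ⟩ := small_delta A a p hppos u
      refine ⟨δ, hδpos, fun s hs => ?_⟩
      have hzW : p + s • u ∈ W := by
        simpa [vadd_eq_add, add_comm] using
          AffineSubspace.vadd_mem_of_mem_direction (W.direction.smul_mem s hu) hpW
      have hzFX : p + s • u ∈ 𝓕.F q ∩ X := by rw [← hWset]; exact hzW
      refine ⟨fun i => ?_, hzFX.1⟩
      by_cases hi : A.α i p = 0
      · rw [hXzero _ hzFX.2 i hi, mul_zero]
      · exact (hδ s hs i hi).le
    have hdir0 : ∀ u ∈ W.direction, (𝓕.hq q).linear u = 0 := by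
      intro u hu
      by_contra hne0
      obtain ⟨δ, hδpos, hδ⟩ := hPmem u hu
      rcases lt_or_gt_of_ne hne0 with hlt | hgt
      · have hz := hδ (δ/2) (by rw [abs_of_pos (by linarith)]; linarith)
        have hmin := hpmin _ hz
        rw [show p + (δ/2) • u = (δ/2) • u + p from add_comm _ _, affAdd,
          LinearMap.map_smul, smul_eq_mul] at hmin
        nlinarith [mul_neg_of_pos_of_neg (show (0:ℝ) < δ/2 by linarith) hlt]
      · have hz := hδ (-(δ/2)) (by rw [abs_neg, abs_of_pos (by linarith)]; linarith)
        have hmin := hpmin _ hz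
        rw [show p + (-(δ/2)) • u = (-(δ/2)) • u + p from add_comm _ _, affAdd,
          LinearMap.map_smul, smul_eq_mul] at hmin
        nlinarith [mul_neg_of_neg_of_pos (show (-(δ/2):ℝ) < 0 by linarith) hgt]
    have hm0 : 𝓕.hq q p ≠ 0 := by
      intro hm
      have hpF' : p ∈ 𝓕.F (q-1) := hF'mem p hpP.2 hm
      have hle' : ℓ ≤ (q-1) + dimS X := by
        by_contra hcon
        push_neg at hcon
        have hemp := (hgenX (q-1) (by omega)).2 hcon
        have hmem : p ∈ 𝓕.F (q-1) ∩ X := ⟨hpF', hpX⟩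
        rw [hemp] at hmem
        exact hmem
      obtain ⟨W', hW'ne, hW'set, hW'dim⟩ := (hgenX (q-1) (by omega)).1 hle'
      have hwex : ∃ w₀ ∈ W.direction, (𝓕.hq q).linear w₀ ≠ 0 := by
        by_contra hcon
        push_neg at hcon
        have hsub : (W : Set (Fin ℓ → ℝ)) ⊆ (W' : Set (Fin ℓ → ℝ)) := by
          intro y hy
          have hyFX : y ∈ 𝓕.F q ∩ X := by rw [← hWset]; exact hy
          have hyW : y ∈ W := hy
          have hdiff : y - p ∈ W.direction := by
            simpa [vsub_eq_sub] using AffineSubspace.vsub_mem_direction hyW hpW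
          have hy0 : 𝓕.hq q y = 0 := by
            have hlin := hcon _ hdiff
            rw [hlinsub] at hlin
            rw [hm] at hlin
            linarith
          rw [hW'set]
          exact ⟨hF'mem y hyFX.1 hy0, hyFX.2⟩
        have hlt : Module.finrank ℝ W.direction ≤ Module.finrank ℝ W'.direction :=
          Submodule.finrank_mono (AffineSubspace.direction_le hsub)
        rw [hWdim, hW'dim] at hlt
        omega
      obtain ⟨w₀, hw₀dir, hw₀ne⟩ := hwex
      obtain ⟨y, hyW, z, hzW, hw₀eq⟩ :=
        (AffineSubspace.mem_direction_iff_eq_vsub ⟨p, hpW⟩ w₀).mp hw₀dir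
      have hyFX : y ∈ 𝓕.F q ∩ X := by rw [← hWset]; exact hyW
      have hzFX : z ∈ 𝓕.F q ∩ X := by rw [← hWset]; exact hzW
      have hw₀sub : w₀ = y - z := by rw [hw₀eq, vsub_eq_sub]
      have hlinval : ∀ f : (Fin ℓ → ℝ) →ᵃ[ℝ] ℝ, f.linear w₀ = f y - f z := by
        intro f; rw [hw₀sub, hlinsub]
      have hwα : ∀ i ∈ tset, (A.α i).linear w₀ = 0 := by
        intro i hi
        rw [hlinval, hXzero y hyFX.2 i hi, hXzero z hzFX.2 i hi, sub_zero]
      have hwh : ∀ j : Fin ℓ, q ≤ (j:ℕ) → (𝓕.h j).linear w₀ = 0 := by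
        intro j hj
        rw [hlinval, hyFX.1 j hj, hzFX.1 j hj, sub_zero]
      set c : ℝ := ((𝓕.hq q).linear w₀)⁻¹ with hc
      set w : Fin ℓ → ℝ := c • w₀ with hwdef
      have hw1 : (𝓕.hq q).linear w = 1 := by
        rw [hwdef, LinearMap.map_smul, smul_eq_mul, hc, inv_mul_cancel₀ hw₀ne]
      have hwα' : ∀ i ∈ tset, (A.α i).linear w = 0 := by
        intro i hi; rw [hwdef, LinearMap.map_smul, hwα i hi, smul_zero]
      have hwh' : ∀ j : Fin ℓ, q ≤ (j:ℕ) → (𝓕.h j).linear w = 0 := by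
        intro j hj; rw [hwdef, LinearMap.map_smul, hwh j hj, smul_zero]
      set dv : Fin ℓ → ℝ := (a - p) - (𝓕.hq q a) • w with hdv
      have hlindv : ∀ f : (Fin ℓ → ℝ) →ᵃ[ℝ] ℝ,
          f.linear dv = (f a - f p) - (𝓕.hq q a) * f.linear w := by
        intro f
        rw [hdv, map_sub, LinearMap.map_smul, smul_eq_mul, hlinsub]
      obtain ⟨δ, hδpos, hδ⟩ := small_delta A a p hppos dv
      have hspos : (0:ℝ) < δ/2 := by linarith
      have habs : |δ/2| < δ := by rw [abs_of_pos hspos]; linarith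
      have hαzpt : ∀ f : (Fin ℓ → ℝ) →ᵃ[ℝ] ℝ,
          f (p + (δ/2) • dv) = f p + (δ/2) * f.linear dv := by
        intro f
        rw [show p + (δ/2) • dv = (δ/2) • dv + p from add_comm _ _, affAdd,
          LinearMap.map_smul, smul_eq_mul]
        ring
      have hzC : p + (δ/2) • dv ∈ C := by
        rw [hCcell]
        intro i
        by_cases hi : A.α i p = 0
        · rw [hαzpt, hi, zero_add, hlindv, hwα' i hi, mul_zero, sub_zero, hi, sub_zero]
          have hsq := mul_self_pos.mpr (haa i)
          nlinarith
        · exact hδ (δ/2) habs i hi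
      have hzF' : p + (δ/2) • dv ∈ 𝓕.F (q-1) := by
        intro j hj
        rcases Nat.lt_or_ge (j:ℕ) q with hltj | hgej
        · have hjq : j = ⟨q-1, hqlt⟩ := by
            apply Fin.ext
            show (j:ℕ) = q - 1
            omega
          rw [hjq, ← hhq, hαzpt, hlindv, hw1, hm]
          ring
        · rw [hαzpt, hlindv, hwh' j hgej, haF j hgej, hpP.2 j hgej]
          ring
      exact (Set.eq_empty_iff_forall_notMem.mp hCF' _) ⟨hzC, hzF'⟩
    have hdim0 : Module.finrank ℝ W.direction = 0 := by
      by_contra hne0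
      have hne0' : q + dimS X - ℓ ≠ 0 := by rw [← hWdim]; exact hne0
      have hle' : ℓ ≤ (q-1) + dimS X := by omega
      obtain ⟨W', hW'ne, hW'set, _⟩ := (hgenX (q-1) (by omega)).1 hle'
      obtain ⟨y, hyW'⟩ := hW'ne
      have hyFX' : y ∈ 𝓕.F (q-1) ∩ X := by rw [← hW'set]; exact hyW'
      have hyW : y ∈ W := by
        rw [← AffineSubspace.mem_coe, hWset]
        exact ⟨hFsub hyFX'.1, hyFX'.2⟩
      have hdiff : y - p ∈ W.direction := by
        simpa [vsub_eq_sub] using AffineSubspace.vsub_mem_direction hyW hpW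
      have h1' : 𝓕.hq q y = 𝓕.hq q p := by
        have hlin := hdir0 _ hdiff
        rw [hlinsub] at hlin
        linarith
      have h2' : 𝓕.hq q y = 0 := by
        rw [hhq]
        exact hyFX'.1 ⟨q-1, hqlt⟩ (by simp)
      exact hm0 (by rw [← h1', h2'])
    have hbot : W.direction = ⊥ := Submodule.finrank_eq_zero.mp hdim0
    have hWsingle : (W : Set (Fin ℓ → ℝ)) = {p} := by
      apply Set.Subset.antisymm
      · intro y hy
        have hyW : y ∈ W := hy
        have hdiff : y - p ∈ W.direction := by
          simpa [vsub_eq_sub] using AffineSubspace.vsub_mem_direction hyW hpW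
        rw [hbot, Submodule.mem_bot] at hdiff
        have : y = p := by
          have := sub_eq_zero.mp hdiff
          exact this
        simp [this]
      · intro y hy
        rw [Set.mem_singleton_iff] at hy
        rw [hy]
        exact hpW
    have hXFq : X ∩ 𝓕.F q = {p} := by rw [Set.inter_comm, ← hWset, hWsingle]
    have hdimX : dimS X = ℓ - q := by
      have h1' : q + dimS X - ℓ = 0 := by rw [← hWdim]; exact hdim0
      omega
    exact ⟨X, hLX, hdimX, hXFq⟩
  constructor
  · refine ⟨p₀, ⟨by rw [hKP]; exact hp₀P, fun y hy => hp₀Pmin y (by rw [← hKP]; exact hy)⟩, ?_⟩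
    rintro p' ⟨hp'K, hp'min⟩
    have hp'P : p' ∈ P := by rw [← hKP]; exact hp'K
    have hp'Pmin : ∀ y ∈ P, 𝓕.hq q p' ≤ 𝓕.hq q y := fun y hy =>
      hp'min y (by rw [hKP]; exact hy)
    obtain ⟨X', hLX', hdX', hXF'⟩ := key p' hp'P hp'Pmin
    obtain ⟨X₀, hLX₀, hdX₀, hXF₀⟩ := key p₀ hp₀P hp₀Pmin
    have hval : 𝓕.hq q p' = 𝓕.hq q p₀ :=
      le_antisymm (hp'Pmin p₀ hp₀P) (hp₀Pmin p' hp'P)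
    by_cases hXX : X' = X₀
    · rw [hXX, hXF₀] at hXF'
      exact (Set.singleton_eq_singleton_iff.mp hXF').symm
    · exact absurd hval (h2 q hq1 hq2 X' X₀ hLX' hLX₀ hdX' hdX₀ hXX p'
        (by rw [hXF']; exact Set.mem_singleton _) p₀ (by rw [hXF₀]; exact Set.mem_singleton _))
  · rintro p ⟨hpK, hpmin⟩
    have hpP : p ∈ P := by rw [← hKP]; exact hpK
    have hpPmin : ∀ y ∈ P, 𝓕.hq q p ≤ 𝓕.hq q y := fun y hy =>
      hpmin y (by rw [hKP]; exact hy)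
    obtain ⟨X, hLX, hdX, hXF⟩ := key p hpP hpPmin
    refine ⟨X, ⟨hLX, hdX, hXF⟩, ?_⟩
    rintro X' ⟨hLX', hdX', hXF'⟩
    by_contra hne
    exact (h2 q hq1 hq2 X' X hLX' hLX hdX' hdX hne p
      (by rw [hXF']; exact Set.mem_singleton _) p
      (by rw [hXF]; exact Set.mem_singleton _)) rfl

end IY
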